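/- Let q = (q₁,...,q₅) ∈ ℤ⁵ be admissible, and suppose q is not a permutation of (1,1,1,-1,-3). Then there exist pairwise distinct indices a,b,c,d ∈ {1,2,3,4,5} such that either both q_a + q_b > 0 and q_c + q_d > 0, or both q_a + q_b < 0 and q_c + q_d < 0. -/
import Mathlib


open Finset

noncomputable section

open Finset

noncomputable section

noncomputable def mkPerm (a b c d e : Fin 5)
    (hab : a ≠ b) (hac : a ≠ c) (had : a ≠ d) (hae : a ≠ e)
    (hbc : b ≠ c) (hbd : b ≠ d) (hbe : b ≠ e)
    (hcd : c ≠ d) (hce : c ≠ e) (hde : d ≠ e) : Equiv.Perm (Fin 5) :=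
  Equiv.ofBijective ![a, b, c, d, e] (by
    rw [← Finite.injective_iff_bijective]
    intro x y hxy
    fin_cases x <;> fin_cases y <;> simp_all)

lemma gcdPairs (q : Fin 5 → ℤ)
    (h : ∀ σ : Equiv.Perm (Fin 5), Int.gcd (q (σ 0) + q (σ 1)) (q (σ 2) + q (σ 3)) = 2)
    (a b c d e : Fin 5)
    (hab : a ≠ b) (hac : a ≠ c) (had : a ≠ d) (hae : a ≠ e)
    (hbc : b ≠ c) (hbd : b ≠ d) (hbe : b ≠ e)
    (hcd : c ≠ d) (hce : c ≠ e) (hde : d ≠ e) :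
    Int.gcd (q a + q b) (q c + q d) = 2 := by
  have := h (mkPerm a b c d e hab hac had hae hbc hbd hbe hcd hce hde)
  simpa [mkPerm] using this

lemma eqPerm (q : Fin 5 → ℤ) (a b c d e : Fin 5)
    (hab : a ≠ b) (hac : a ≠ c) (had : a ≠ d) (hae : a ≠ e)
    (hbc : b ≠ c) (hbd : b ≠ d) (hbe : b ≠ e)
    (hcd : c ≠ d) (hce : c ≠ e) (hde : d ≠ e)
    (ha : q a = 1) (hb : q b = 1) (hc : q c = 1) (hd : q d = -1) (he : q e = -3) :
    ∃ σ : Equiv.Perm (Fin 5), ∀ i, q i = ![1, 1, 1, -1, -3] (σ i) := by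
  refine ⟨(mkPerm a b c d e hab hac had hae hbc hbd hbe hcd hce hde).symm, fun i => ?_⟩
  obtain ⟨k, rfl⟩ := (mkPerm a b c d e hab hac had hae hbc hbd hbe hcd hce hde).surjective i
  rw [Equiv.symm_apply_apply]
  fin_cases k <;> simp_all [mkPerm]

lemma gz (x y : ℤ) (h : Int.gcd x y = 2) (hx : x = 0) : y = 2 ∨ y = -2 := by
  subst hx
  rw [Int.gcd_zero_left] at h
  omega

/-- Admissibility of a 5-tuple of integers. -/
def Admissible (q : Fin 5 → ℤ) : Prop :=
  (∀ i, Odd (q i)) ∧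
  (∀ σ : Equiv.Perm (Fin 5), Int.gcd (q (σ 0) + q (σ 1)) (q (σ 2) + q (σ 3)) = 2) ∧
  3 ≤ (Finset.univ.filter fun i => 0 < q i).card

theorem stmt0 (q : Fin 5 → ℤ) (hq : Admissible q)
    (hnp : ¬ ∃ σ : Equiv.Perm (Fin 5), ∀ i, q i = ![1, 1, 1, -1, -3] (σ i)) :
    ∃ a b c d : Fin 5, a ≠ b ∧ a ≠ c ∧ a ≠ d ∧ b ≠ c ∧ b ≠ d ∧ c ≠ d ∧
      ((0 < q a + q b ∧ 0 < q c + q d) ∨ (q a + q b < 0 ∧ q c + q d < 0)) := by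
  obtain ⟨hodd, hg, hcard⟩ := hq
  have ho : ∀ i, q i % 2 = 1 := fun i => Int.odd_iff.mp (hodd i)
  obtain ⟨t, hts, htc⟩ := Finset.exists_subset_card_eq hcard
  obtain ⟨a, b, c, hab, hac, hbc, rfl⟩ := Finset.card_eq_three.mp htc
  have hqa : 0 < q a := (Finset.mem_filter.mp (hts (by simp))).2
  have hqb : 0 < q b := (Finset.mem_filter.mp (hts (by simp))).2
  have hqc : 0 < q c := (Finset.mem_filter.mp (hts (by simp))).2
  have hcard2 : ((univ : Finset (Fin 5)) \ {a, b, c}).card = 2 := by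
    rw [Finset.card_sdiff_of_subset (Finset.subset_univ _), htc]
    simp
  obtain ⟨d, e, hde, hdeq⟩ := Finset.card_eq_two.mp hcard2
  have hdmem := Finset.mem_sdiff.mp (hdeq ▸ Finset.mem_insert_self d {e})
  have hemem := Finset.mem_sdiff.mp (by rw [hdeq]; simp : e ∈ univ \ {a, b, c})
  simp only [Finset.mem_insert, Finset.mem_singleton, not_or] at hdmem hemem
  obtain ⟨hda, hdb, hdc⟩ := hdmem.2
  obtain ⟨hea, heb, hec⟩ := hemem.2
  have hba := hab.symm; have hca := hac.symm; have hcb := hbc.symm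
  have hed := hde.symm
  have had : a ≠ d := Ne.symm hda
  have hbd : b ≠ d := Ne.symm hdb
  have hcd : c ≠ d := Ne.symm hdc
  have hae : a ≠ e := Ne.symm hea
  have hbe : b ≠ e := Ne.symm heb
  have hce : c ≠ e := Ne.symm hec
  -- sign of q d and q e
  rcases lt_trichotomy (q d) 0 with hqd | hqd | hqd
  rotate_left
  · exact absurd (ho d) (by omega)
  · exact ⟨a, b, c, d, hab, hac, had, hbc, hbd, hcd, Or.inl ⟨by omega, by omega⟩⟩
  rcases lt_trichotomy (q e) 0 with hqe | hqe | hqe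
  rotate_left
  · exact absurd (ho e) (by omega)
  · exact ⟨a, b, c, e, hab, hac, hae, hbc, hbe, hce, Or.inl ⟨by omega, by omega⟩⟩
  -- F1 cases
  by_cases p1 : 0 < q a + q d
  · exact ⟨b, c, a, d, hbc, hba, hbd, hca, hcd, had, Or.inl ⟨by omega, p1⟩⟩
  by_cases p2 : 0 < q b + q d
  · exact ⟨a, c, b, d, hac, hab, had, hcb, hcd, hbd, Or.inl ⟨by omega, p2⟩⟩
  by_cases p3 : 0 < q c + q d
  · exact ⟨a, b, c, d, hab, hac, had, hbc, hbd, hcd, Or.inl ⟨by omega, p3⟩⟩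
  by_cases p4 : 0 < q a + q e
  · exact ⟨b, c, a, e, hbc, hba, hbe, hca, hce, hae, Or.inl ⟨by omega, p4⟩⟩
  by_cases p5 : 0 < q b + q e
  · exact ⟨a, c, b, e, hac, hab, hae, hcb, hce, hbe, Or.inl ⟨by omega, p5⟩⟩
  by_cases p6 : 0 < q c + q e
  · exact ⟨a, b, c, e, hab, hac, hae, hbc, hbe, hce, Or.inl ⟨by omega, p6⟩⟩
  -- F2 cases
  by_cases m1 : q a + q d < 0 ∧ q b + q e < 0
  · exact ⟨a, d, b, e, had, hab, hae, hdb, hde, hbe, Or.inr m1⟩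
  by_cases m2 : q a + q d < 0 ∧ q c + q e < 0
  · exact ⟨a, d, c, e, had, hac, hae, hdc, hde, hce, Or.inr m2⟩
  by_cases m3 : q b + q d < 0 ∧ q a + q e < 0
  · exact ⟨b, d, a, e, hbd, hba, hbe, hda, hde, hae, Or.inr m3⟩
  by_cases m4 : q b + q d < 0 ∧ q c + q e < 0
  · exact ⟨b, d, c, e, hbd, hbc, hbe, hdc, hde, hce, Or.inr m4⟩
  by_cases m5 : q c + q d < 0 ∧ q a + q e < 0
  · exact ⟨c, d, a, e, hcd, hca, hce, hda, hde, hae, Or.inr m5⟩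
  by_cases m6 : q c + q d < 0 ∧ q b + q e < 0
  · exact ⟨c, d, b, e, hcd, hcb, hce, hdb, hde, hbe, Or.inr m6⟩
  exfalso
  by_cases pa : q a + q d < 0
  · have hbe0 : q b + q e = 0 := by omega
    have hce0 : q c + q e = 0 := by omega
    by_cases sa : q a + q e < 0
    · have hbd0 : q b + q d = 0 := by omega
      have hcd0 : q c + q d = 0 := by omega
      have G := gz _ _ (gcdPairs q hg b e c d a hbe hbc hbd hba hec hed hea hcd hca hda) hbe0
      omega
    · have hae0 : q a + q e = 0 := by omega
      have D1 := gz _ _ (gcdPairs q hg a e b c d hae hab hac had heb hec hed hbc hbd hcd) hae0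
      have D2 := gz _ _ (gcdPairs q hg a e b d c hae hab had hac heb hed hec hbd hbc hdc) hae0
      exact absurd (eqPerm q a b c e d hab hac hae had hbc hbe hbd hce hcd hed
        (by omega) (by omega) (by omega) (by omega) (by omega)) hnp
  by_cases pb : q b + q d < 0
  · have hae0 : q a + q e = 0 := by omega
    have hce0 : q c + q e = 0 := by omega
    by_cases sb : q b + q e < 0
    · have had0 : q a + q d = 0 := by omega
      have hcd0 : q c + q d = 0 := by omega
      have G := gz _ _ (gcdPairs q hg a e c d b hae hac had hab hec hed heb hcd hcb hdb) hae0
      omega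
    · have hbe0 : q b + q e = 0 := by omega
      have D1 := gz _ _ (gcdPairs q hg b e a c d hbe hba hbc hbd hea hec hed hac had hcd) hbe0
      have D2 := gz _ _ (gcdPairs q hg b e a d c hbe hba hbd hbc hea hed hec had hac hdc) hbe0
      exact absurd (eqPerm q a b c e d hab hac hae had hbc hbe hbd hce hcd hed
        (by omega) (by omega) (by omega) (by omega) (by omega)) hnp
  by_cases pc : q c + q d < 0
  · have hae0 : q a + q e = 0 := by omega
    have hbe0 : q b + q e = 0 := by omega
    by_cases sc : q c + q e < 0
    · have had0 : q a + q d = 0 := by omega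
      have hbd0 : q b + q d = 0 := by omega
      have G := gz _ _ (gcdPairs q hg a e b d c hae hab had hac heb hed hec hbd hbc hdc) hae0
      omega
    · have hce0 : q c + q e = 0 := by omega
      have D1 := gz _ _ (gcdPairs q hg c e a b d hce hca hcb hcd hea heb hed hab had hbd) hce0
      have D2 := gz _ _ (gcdPairs q hg c e a d b hce hca hcd hcb hea hed heb had hab hdb) hce0
      exact absurd (eqPerm q a b c e d hab hac hae had hbc hbe hbd hce hcd hed
        (by omega) (by omega) (by omega) (by omega) (by omega)) hnp
  have had0 : q a + q d = 0 := by omega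
  have D1 := gz _ _ (gcdPairs q hg a d b c e had hab hac hae hdb hdc hde hbc hbe hce) had0
  have D2 := gz _ _ (gcdPairs q hg a d b e c had hab hae hac hdb hde hdc hbe hbc hec) had0
  exact absurd (eqPerm q a b c d e hab hac had hae hbc hbd hbe hcd hce hde
    (by omega) (by omega) (by omega) (by omega) (by omega)) hnp
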